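/- Let β₂ ∈ (0,1) and let C ∈ ℕ satisfy 5·β₂^(C−2) ≤ (1−β₂)/(4−β₂). Consider the online optimization problem on F = [−2,2] with the linear/piecewise function sequence f_t(x) = −100 for x < 0; 0 for x > 1; −x for 0 ≤ x ≤ 1 and t mod C = 1; 2x for 0 ≤ x ≤ 1 and t mod C = 2; and 0 otherwise. Run Adam with β₁ = 0, starting at x₁ = 0 with m₀ = v₀ = 0: at step t set g_t = ∇f_t(x_t) (i.e. g_t = −1 if 0 ≤ x_t ≤ 1 and t mod C = 1, g_t = 2 if 0 ≤ x_t ≤ 1 and t mod C = 2, and g_t = 0 otherwise), v_t = β₂·v_{t−1} + (1−β₂)·g_t², and x_{t+1} = proj_{[−2,2]}(x_t − (α/√t)·g_t/√v_t) for any initial step size α > 0 (with the convention that the step is 0 when g_t = 0, in which case v_t may vanish). Then the regret R_T = Σ_{t=1}^T f_t(x_t) − min_{x∈[−2,2]} Σ_{t=1}^T f_t(x) satisfies R_T ≥ 100·T for every T that is a multiple of C; in particular R_T/T does not converge to 0 as T → ∞, i.e. Adam has non-zero average regret for every initial step size α. -/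
import Mathlib


open Filter

set_option maxHeartbeats 1000000

/-- The `C`-periodic function sequence on `F = [-2,2]` used in the non-convergence
example for Adam: `f_t(x) = -100` for `x < 0`; `0` for `x > 1`; `-x` for
`0 ≤ x ≤ 1` and `t mod C = 1`; `2x` for `0 ≤ x ≤ 1` and `t mod C = 2`; `0` otherwise. -/
noncomputable def adamPaperF (C : ℕ) (t : ℕ) (x : ℝ) : ℝ :=
  if x < 0 then -100
  else if 1 < x then 0
  else if t % C = 1 then -x
  else if t % C = 2 then 2 * x
  else 0

/-- Non-convergence of Adam (with `β₁ = 0`) on the `C`-periodic online convex optimization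
problem over `F = [-2,2]`: for any initial step size `α > 0`, the regret satisfies
`R_T ≥ 100·T` whenever `C ∣ T`; in particular, `R_T / T` does not converge to `0`,
i.e. Adam has non-zero average regret. -/
theorem adam_nonconvergence_spec_example
    (beta2 : ℝ) (hb20 : 0 < beta2) (hb21 : beta2 < 1)
    (C : ℕ) (hC : 5 * beta2 ^ (C - 2) ≤ (1 - beta2) / (4 - beta2))
    (alpha : ℝ) (halpha : 0 < alpha)
    (x v g : ℕ → ℝ)
    (hx1 : x 1 = 0) (hv0 : v 0 = 0)
    -- `g t = ∇f_t(x_t)`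
    (hg : ∀ t, 1 ≤ t → g t =
      if 0 ≤ x t ∧ x t ≤ 1 then
        (if t % C = 1 then -1 else if t % C = 2 then 2 else 0)
      else 0)
    -- second moment update
    (hv : ∀ t, 1 ≤ t → v t = beta2 * v (t - 1) + (1 - beta2) * g t ^ 2)
    -- projected update with step size `α/√t` (the step vanishes when `g t = 0`)
    (hx : ∀ t, 1 ≤ t → x (t + 1) =
      max (-2) (min 2 (x t - (alpha / Real.sqrt t) * g t / Real.sqrt (v t)))) :
    (∀ T : ℕ, C ∣ T →
      100 * (T : ℝ) ≤
        (∑ t ∈ Finset.Icc 1 T, adamPaperF C t (x t)) -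
          sInf ((fun y => ∑ t ∈ Finset.Icc 1 T, adamPaperF C t y) '' Set.Icc (-2 : ℝ) 2)) ∧
    ¬ Tendsto (fun T : ℕ =>
        ((∑ t ∈ Finset.Icc 1 T, adamPaperF C t (x t)) -
          sInf ((fun y => ∑ t ∈ Finset.Icc 1 T, adamPaperF C t y) '' Set.Icc (-2 : ℝ) 2)) / T)
      atTop (nhds 0) := by
  classical
  have hb2' : (0:ℝ) < 1 - beta2 := by linarith
  have h4b : (0:ℝ) < 4 - beta2 := by linarith
  have hC3 : 3 ≤ C := by
    by_contra h
    push_neg at h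
    have h2 : C - 2 = 0 := by omega
    rw [h2, pow_zero, mul_one] at hC
    have : (1 - beta2)/(4 - beta2) < 5 := by
      rw [div_lt_iff₀ h4b]; nlinarith
    linarith
  have hgval : ∀ t, 1 ≤ t → g t = -1 ∨ g t = 2 ∨ g t = 0 := by
    intro t ht; rw [hg t ht]; split_ifs <;> simp
  have hgsq : ∀ t, 1 ≤ t → g t ^ 2 ≤ 4 := by
    intro t ht; rcases hgval t ht with h|h|h <;> rw [h] <;> norm_num
  have hvnn : ∀ t, 0 ≤ v t := by
    intro t; induction t with
    | zero => exact le_of_eq hv0.symm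
    | succ n ih =>
      rw [hv (n+1) (by omega)]
      simp only [Nat.add_sub_cancel]
      have := sq_nonneg (g (n+1))
      nlinarith
  have hv4 : ∀ t, v t ≤ 4 := by
    intro t; induction t with
    | zero => rw [hv0]; norm_num
    | succ n ih =>
      rw [hv (n+1) (by omega)]; simp only [Nat.add_sub_cancel]
      have := hgsq (n+1) (by omega)
      nlinarith
  have hxmem : ∀ t, 1 ≤ t → -2 ≤ x t ∧ x t ≤ 2 := by
    intro t ht
    obtain ⟨s, rfl⟩ := Nat.exists_eq_add_of_le ht
    cases s with
    | zero => rw [show 1+0 = 1 from rfl, hx1]; norm_num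
    | succ m =>
      rw [show 1+(m+1) = (m+1)+1 by omega, hx (m+1) (by omega)]
      exact ⟨le_max_left _ _, max_le (by norm_num) (min_le_left _ _)⟩
  have hstep0 : ∀ t, 1 ≤ t → g t = 0 → x (t+1) = x t := by
    intro t ht h0
    rw [hx t ht, h0, mul_zero, zero_div, sub_zero]
    have := hxmem t ht
    rw [min_eq_right this.2, max_eq_right this.1]
  have hfreeze : ∀ t, 1 ≤ t → 1 < x t → ∀ s, t ≤ s → x s = x t := by
    intro t ht hxt s hs
    induction s with
    | zero => omega
    | succ n ih =>
      rcases Nat.lt_or_ge t (n+1) with h | h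
      · have hn : t ≤ n := by omega
        have hxn := ih hn
        have h1n : 1 ≤ n := le_trans ht hn
        have hg0 : g n = 0 := by
          rw [hg n h1n]
          have hno : ¬ (0 ≤ x n ∧ x n ≤ 1) := by
            rw [hxn]; rintro ⟨_, h2⟩; linarith
          simp [hno]
        rw [hstep0 n h1n hg0, hxn]
      · have : t = n + 1 := by omega
        rw [this]
  have hquiet : ∀ t, 1 ≤ t → t % C ≠ 1 → t % C ≠ 2 → g t = 0 := by
    intro t ht h1 h2
    rw [hg t ht]
    by_cases h : 0 ≤ x t ∧ x t ≤ 1 <;> simp [h, h1, h2]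
  have hfge : ∀ t (y : ℝ), -100 ≤ adamPaperF C t y := by
    intro t y
    unfold adamPaperF
    split_ifs with h1 h2 h3 h4
    · norm_num
    · norm_num
    · push_neg at h2; linarith
    · push_neg at h1; linarith
    · norm_num
  have hIcc : ∀ n : ℕ, Finset.Icc 1 n = Finset.Ioc 0 n := by
    intro n; ext a; simp; omega
  have hsInf : ∀ T : ℕ,
      sInf ((fun y => ∑ t ∈ Finset.Icc 1 T, adamPaperF C t y) '' Set.Icc (-2:ℝ) 2)
        = -100 * T := by
    intro T
    have hval : (fun y => ∑ t ∈ Finset.Icc 1 T, adamPaperF C t y) (-1) = -100 * T := by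
      simp only
      have h1 : ∀ t ∈ Finset.Icc 1 T, adamPaperF C t (-1:ℝ) = -100 := by
        intro t _; unfold adamPaperF; rw [if_pos (by norm_num)]
      rw [Finset.sum_congr rfl h1, Finset.sum_const, Nat.card_Icc,
        Nat.add_sub_cancel, nsmul_eq_mul]
      ring
    have hlb : ∀ z ∈ ((fun y => ∑ t ∈ Finset.Icc 1 T, adamPaperF C t y) '' Set.Icc (-2:ℝ) 2),
        -100 * (T:ℝ) ≤ z := by
      rintro z ⟨y, _, rfl⟩
      calc (-100:ℝ) * T = ∑ _t ∈ Finset.Icc 1 T, (-100:ℝ) := by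
            rw [Finset.sum_const, Nat.card_Icc, Nat.add_sub_cancel, nsmul_eq_mul]; ring
        _ ≤ _ := Finset.sum_le_sum (fun t _ => hfge t y)
    apply le_antisymm
    · exact csInf_le ⟨-100 * T, hlb⟩ ⟨-1, by norm_num, hval⟩
    · exact le_csInf ⟨_, ⟨-1, by norm_num, hval⟩⟩ hlb
  -- main block induction
  have main : ∀ K : ℕ,
      (0 ≤ x (K*C+1) ∧ x (K*C+1) ≤ 1 ∧ v (K*C) ≤ (1-beta2)/(4-beta2)
        ∧ x (K*C+1) ≤ ∑ t ∈ Finset.Ioc 0 (K*C), adamPaperF C t (x t))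
      ∨ (1 < x (K*C+1) ∧ (∀ s, K*C+1 ≤ s → x s = x (K*C+1))
        ∧ 0 ≤ ∑ t ∈ Finset.Ioc 0 (K*C), adamPaperF C t (x t)) := by
    intro K
    induction K with
    | zero =>
      left
      simp only [Nat.zero_mul, Nat.zero_add, hx1, hv0, Finset.Ioc_self, Finset.sum_empty]
      exact ⟨le_refl 0, by norm_num, div_nonneg hb2'.le h4b.le, le_refl 0⟩
    | succ K ih =>
      have hn2 : (K+1)*C = K*C + C := by ring
      set n := K * C with hn
      rw [hn2]
      have hsplit : ∑ t ∈ Finset.Ioc 0 (n+C), adamPaperF C t (x t)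
          = (∑ t ∈ Finset.Ioc 0 n, adamPaperF C t (x t))
            + ∑ t ∈ Finset.Ioc n (n+C), adamPaperF C t (x t) :=
        (Finset.sum_Ioc_consecutive _ (Nat.zero_le n) (by omega)).symm
      rcases ih with ⟨hx0, hxle1, hvK, hsum⟩ | ⟨hgt, hfr, hsum⟩
      · -- active case
        have hm1 : (n+1) % C = 1 := by
          rw [hn, Nat.add_comm, Nat.add_mul_mod_self_right]; exact Nat.mod_eq_of_lt (by omega)
        have hm2 : (n+2) % C = 2 := by
          rw [hn, Nat.add_comm, Nat.add_mul_mod_self_right]; exact Nat.mod_eq_of_lt (by omega)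
        have hgt1 : g (n+1) = -1 := by
          rw [hg (n+1) (by omega), if_pos ⟨hx0, hxle1⟩, if_pos hm1]
        have hv1 : v (n+1) = beta2 * v n + (1 - beta2) := by
          rw [hv (n+1) (by omega), Nat.add_sub_cancel, hgt1]; ring
        have hv1pos : 0 < v (n+1) := by rw [hv1]; nlinarith [hvnn n]
        have hv1le : (4 - beta2) * v (n+1) ≤ 4 * (1 - beta2) := by
          rw [hv1]
          have h := (le_div_iff₀ h4b).mp hvK
          nlinarith [mul_le_mul_of_nonneg_left h hb20.le]
        have hs1pos : (0:ℝ) < Real.sqrt ((n+1 : ℕ) : ℝ) := by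
          apply Real.sqrt_pos.mpr; push_cast; linarith
        have hw1pos : (0:ℝ) < Real.sqrt (v (n+1)) := Real.sqrt_pos.mpr hv1pos
        set A := alpha / Real.sqrt ((n+1 : ℕ) : ℝ) / Real.sqrt (v (n+1)) with hA
        have hApos : 0 < A := div_pos (div_pos halpha hs1pos) hw1pos
        have hx2 : x (n+2) = max (-2) (min 2 (x (n+1) + A)) := by
          rw [hx (n+1) (by omega), hgt1, hA]
          congr 2
          ring
        by_cases hesc : 1 < x (n+2)
        · -- escape: frozen from n+2 on
          right
          have hfr2 := hfreeze (n+2) (by omega) hesc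
          have hxtop : x (n+C+1) = x (n+2) := hfr2 (n+C+1) (by omega)
          have hf1 : adamPaperF C (n+1) (x (n+1)) = -x (n+1) := by
            unfold adamPaperF
            rw [if_neg (by linarith), if_neg (by linarith), if_pos hm1]
          have hblock : ∑ t ∈ Finset.Ioc n (n+C), adamPaperF C t (x t) = -x (n+1) := by
            rw [← Finset.sum_Ioc_consecutive _ (show n ≤ n+1 by omega) (show n+1 ≤ n+C by omega)]
            have e1 : ∑ t ∈ Finset.Ioc n (n+1), adamPaperF C t (x t) = -x (n+1) := by
              rw [Finset.sum_Ioc_succ_top (le_refl n), Finset.Ioc_self, Finset.sum_empty,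
                zero_add, hf1]
            have e2 : ∑ t ∈ Finset.Ioc (n+1) (n+C), adamPaperF C t (x t) = 0 := by
              apply Finset.sum_eq_zero
              intro t htm
              rw [Finset.mem_Ioc] at htm
              have hxt : x t = x (n+2) := hfr2 t (by omega)
              unfold adamPaperF
              rw [if_neg (by rw [hxt]; linarith), if_pos (by rw [hxt]; exact hesc)]
            rw [e1, e2, add_zero]
          refine ⟨by rw [hxtop]; exact hesc, ?_, ?_⟩
          · intro s hs
            rw [hfr2 s (by omega), hxtop]
          · rw [hsplit, hblock]; linarith
        · -- no escape
          push_neg at hesc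
          have hle2 : x (n+1) + A ≤ 2 := by
            by_contra h
            push_neg at h
            rw [hx2, min_eq_left h.le, max_eq_right (by norm_num)] at hesc
            linarith
          have hx2' : x (n+2) = x (n+1) + A := by
            rw [hx2, min_eq_right hle2, max_eq_right (by linarith)]
          have hx2pos : 0 < x (n+2) := by rw [hx2']; linarith
          have hgt2 : g (n+2) = 2 := by
            rw [hg (n+2) (by omega), if_pos ⟨hx2pos.le, hesc⟩, hm2]
            norm_num
          have hv2 : v (n+2) = beta2 * v (n+1) + (1 - beta2) * 4 := by
            rw [hv (n+2) (by omega), show n+2-1 = n+1 by omega, hgt2]; ring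
          have hv2pos : 0 < v (n+2) := by rw [hv2]; nlinarith [hvnn (n+1)]
          have hv2ge : 4 * v (n+1) ≤ v (n+2) := by rw [hv2]; nlinarith
          have hw2pos : (0:ℝ) < Real.sqrt (v (n+2)) := Real.sqrt_pos.mpr hv2pos
          have hs2pos : (0:ℝ) < Real.sqrt ((n+2 : ℕ) : ℝ) := by
            apply Real.sqrt_pos.mpr; push_cast; linarith
          set B := alpha / Real.sqrt ((n+2 : ℕ) : ℝ) * 2 / Real.sqrt (v (n+2)) with hB
          have hBpos : 0 < B :=
            div_pos (mul_pos (div_pos halpha hs2pos) (by norm_num)) hw2pos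
          have hBA : B ≤ A := by
            have hs12 : Real.sqrt ((n+1 : ℕ) : ℝ) ≤ Real.sqrt ((n+2 : ℕ) : ℝ) := by
              apply Real.sqrt_le_sqrt; push_cast; linarith
            have hw12 : 2 * Real.sqrt (v (n+1)) ≤ Real.sqrt (v (n+2)) := by
              have h1 : Real.sqrt (4 * v (n+1)) ≤ Real.sqrt (v (n+2)) :=
                Real.sqrt_le_sqrt hv2ge
              rw [Real.sqrt_mul (by norm_num) , show Real.sqrt 4 = 2 by
                rw [show (4:ℝ) = 2^2 by norm_num, Real.sqrt_sq (by norm_num)]] at h1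
              exact h1
            rw [hA, hB, div_mul_eq_mul_div, div_div, div_div,
              div_le_div_iff₀ (mul_pos hs2pos hw2pos) (mul_pos hs1pos hw1pos)]
            have hprod : Real.sqrt ((n+1 : ℕ) : ℝ) * (2 * Real.sqrt (v (n+1)))
                ≤ Real.sqrt ((n+2 : ℕ) : ℝ) * Real.sqrt (v (n+2)) :=
              mul_le_mul hs12 hw12 (by positivity) (by positivity)
            nlinarith [mul_le_mul_of_nonneg_left hprod halpha.le]
          have hx3 : x (n+3) = x (n+2) - B := by
            rw [show n+3 = (n+2)+1 by omega, hx (n+2) (by omega), hgt2, hB]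
            rw [min_eq_right (by linarith), max_eq_right (by nlinarith [hx2'])]
          have hx3ge : x (n+1) ≤ x (n+3) := by rw [hx3, hx2']; linarith
          have hx3le : x (n+3) ≤ x (n+2) := by rw [hx3]; linarith
          -- quiet propagation
          have hq : ∀ j, j ≤ C - 2 →
              x (n+3+j) = x (n+3) ∧ v (n+2+j) = beta2 ^ j * v (n+2) := by
            intro j
            induction j with
            | zero => intro _; simp
            | succ j ihj =>
              intro hj
              obtain ⟨hxj, hvj⟩ := ihj (by omega)
              have hmod : (n+3+j) % C ≠ 1 ∧ (n+3+j) % C ≠ 2 := by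
                have hm : (n+3+j) % C = (3+j) % C := by
                  rw [hn, show K*C+3+j = 3+j + K*C by ring, Nat.add_mul_mod_self_right]
                rcases Nat.lt_or_ge (3+j) C with h | h
                · rw [hm, Nat.mod_eq_of_lt h]; omega
                · have : 3 + j = C := by omega
                  rw [hm, this, Nat.mod_self]; omega
              have hg0 : g (n+3+j) = 0 := hquiet _ (by omega) hmod.1 hmod.2
              constructor
              · rw [show n+3+(j+1) = (n+3+j)+1 by omega, hstep0 _ (by omega) hg0, hxj]
              · rw [show n+2+(j+1) = (n+3+j) by omega, hv _ (by omega), hg0,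
                  show n+3+j-1 = n+2+j by omega, hvj]
                ring
          obtain ⟨hqx, hqv⟩ := hq (C-2) (le_refl _)
          have hxtop : x (n+C+1) = x (n+3) := by
            rw [← hqx]; congr 1; omega
          have hvtop : v (n+C) = beta2 ^ (C-2) * v (n+2) := by
            rw [← hqv]; congr 1; omega
          -- block sum
          have hf1 : adamPaperF C (n+1) (x (n+1)) = -x (n+1) := by
            unfold adamPaperF
            rw [if_neg (by linarith), if_neg (by linarith), if_pos hm1]
          have hf2 : adamPaperF C (n+2) (x (n+2)) = 2 * x (n+2) := by
            unfold adamPaperF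
            rw [if_neg (by linarith), if_neg (by linarith), hm2]
            norm_num
          have hblock : ∑ t ∈ Finset.Ioc n (n+C), adamPaperF C t (x t)
              = -x (n+1) + 2 * x (n+2) := by
            rw [← Finset.sum_Ioc_consecutive _ (show n ≤ n+2 by omega) (show n+2 ≤ n+C by omega)]
            have e1 : ∑ t ∈ Finset.Ioc n (n+2), adamPaperF C t (x t)
                = -x (n+1) + 2 * x (n+2) := by
              rw [show n+2 = (n+1)+1 by omega, Finset.sum_Ioc_succ_top (by omega),
                Finset.sum_Ioc_succ_top (le_refl n), Finset.Ioc_self, Finset.sum_empty,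
                zero_add, hf1, hf2]
            have e2 : ∑ t ∈ Finset.Ioc (n+2) (n+C), adamPaperF C t (x t) = 0 := by
              apply Finset.sum_eq_zero
              intro t htm
              rw [Finset.mem_Ioc] at htm
              have hxt : x t = x (n+3) := by
                have := (hq (t - (n+3)) (by omega)).1
                rw [show n+3+(t-(n+3)) = t by omega] at this
                exact this
              have hmod : t % C ≠ 1 ∧ t % C ≠ 2 := by
                have hm : t % C = (t - n) % C := by
                  rw [show t = t - n + n by omega, hn, show t-(K*C)+K*C = t-(K*C)+K*C by rfl]
                  rw [Nat.add_mul_mod_self_right, show t - K*C + K*C - K*C = t - K*C by omega]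
                rcases Nat.lt_or_ge (t - n) C with h | h
                · rw [hm, Nat.mod_eq_of_lt h]; omega
                · have : t - n = C := by omega
                  rw [hm, this, Nat.mod_self]; omega
              unfold adamPaperF
              rw [if_neg (by rw [hxt]; linarith), if_neg (by rw [hxt]; linarith),
                if_neg hmod.1, if_neg hmod.2]
            rw [e1, e2, add_zero]
          left
          have hvnew : v (n+C) ≤ (1-beta2)/(4-beta2) := by
            rw [hvtop]
            have hp : (0:ℝ) ≤ beta2 ^ (C-2) := by positivity
            have h42 : v (n+2) ≤ 4 := hv4 (n+2)
            nlinarith [mul_le_mul_of_nonneg_left h42 hp]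
          refine ⟨?_, ?_, hvnew, ?_⟩
          · rw [hxtop]; linarith
          · rw [hxtop]; linarith
          · rw [hxtop, hsplit, hblock]
            linarith
      · -- frozen case
        right
        have hxtop : x (n+C+1) = x (n+1) := hfr (n+C+1) (by omega)
        have hblock : ∑ t ∈ Finset.Ioc n (n+C), adamPaperF C t (x t) = 0 := by
          apply Finset.sum_eq_zero
          intro t htm
          rw [Finset.mem_Ioc] at htm
          have hxt : x t = x (n+1) := hfr t (by omega)
          unfold adamPaperF
          rw [if_neg (by rw [hxt]; linarith), if_pos (by rw [hxt]; exact hgt)]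
        refine ⟨by rw [hxtop]; exact hgt, ?_, by rw [hsplit, hblock]; linarith⟩
        intro s hs
        rw [hfr s (by omega), hxtop]
  have hmainsum : ∀ K : ℕ, 0 ≤ ∑ t ∈ Finset.Ioc 0 (K*C), adamPaperF C t (x t) := by
    intro K
    rcases main K with ⟨h0, _, _, hs⟩ | ⟨_, _, hs⟩
    · linarith
    · exact hs
  have hreg : ∀ T : ℕ, C ∣ T →
      100 * (T : ℝ) ≤
        (∑ t ∈ Finset.Icc 1 T, adamPaperF C t (x t)) -
          sInf ((fun y => ∑ t ∈ Finset.Icc 1 T, adamPaperF C t y) '' Set.Icc (-2 : ℝ) 2) := by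
    rintro T ⟨K, rfl⟩
    rw [hsInf, hIcc]
    have := hmainsum K
    rw [show K * C = C * K by ring] at this
    push_cast
    linarith
  refine ⟨hreg, ?_⟩
  intro htend
  obtain ⟨N, hN⟩ := Metric.tendsto_atTop.mp htend 100 (by norm_num)
  have hTN : N ≤ C * (N + 1) := by
    calc N ≤ 1 * (N+1) := by omega
    _ ≤ C * (N+1) := Nat.mul_le_mul_right _ (by omega)
  have h1 := hN (C * (N+1)) hTN
  rw [Real.dist_eq, sub_zero] at h1
  have h2 := hreg (C * (N+1)) ⟨N+1, rfl⟩
  have hTpos : (0:ℝ) < (C * (N+1) : ℕ) := by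
    have : 0 < C * (N+1) := Nat.mul_pos (by omega) (by omega)
    exact_mod_cast this
  have h3 : (100:ℝ) ≤ ((∑ t ∈ Finset.Icc 1 (C*(N+1)), adamPaperF C t (x t)) -
      sInf ((fun y => ∑ t ∈ Finset.Icc 1 (C*(N+1)), adamPaperF C t y) '' Set.Icc (-2 : ℝ) 2))
        / (C*(N+1) : ℕ) := by
    rw [le_div_iff₀ hTpos]
    linarith
  have h4 := le_abs_self (((∑ t ∈ Finset.Icc 1 (C*(N+1)), adamPaperF C t (x t)) -
      sInf ((fun y => ∑ t ∈ Finset.Icc 1 (C*(N+1)), adamPaperF C t y) '' Set.Icc (-2 : ℝ) 2))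
        / (C*(N+1) : ℕ))
  linarith
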